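/- Let A = {0, 1, …, m} with m ≥ 1, so |A| = m + 1, let n ≥ 7, and let u = m · (m−1) · m^{n−2} (a word of length n). Then the number of Nyldon words x over A with |x| ≤ 2n + 1 and x >_lex u equals (|A|^{n+2} − |A|)/(|A| − 1) − (|A|³ + |A|² + 2|A| + 2). -/

import Mathlib

/-!
Common definitions: words over a totally ordered alphabet, lexicographic order,
Nyldon and Lyndon words, Nyldon-like sets, right Hall sets, and (circular) codes.
-/

/-- Strict lexicographic order on words: `u <_lex v` iff `u` is a proper prefix of `v`,
or `u` and `v` first differ at a position where `u` has the smaller letter. -/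
def LexLt {A : Type*} [LinearOrder A] (u v : List A) : Prop :=
  List.Lex (· < ·) u v

/-- Nonstrict lexicographic order on words. -/
def LexLe {A : Type*} [LinearOrder A] (u v : List A) : Prop :=
  u = v ∨ LexLt u v

theorem length_le_length_flatten_of_ne_nil {A : Type*} {s : List (List A)}
    (h : ∀ g ∈ s, g ≠ []) : s.length ≤ s.flatten.length := by
  induction s with
  | nil => simp
  | cons a t ih =>
    simp only [List.flatten_cons, List.length_append, List.length_cons]
    have ha : 1 ≤ a.length := List.length_pos_iff.mpr (h a (by simp))
    have ht := ih (fun g hg => h g (List.mem_cons_of_mem _ hg))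
    omega

theorem length_lt_length_flatten {A : Type*} {f : List A} {fs : List (List A)}
    (h2 : 2 ≤ fs.length) (hne : ∀ g ∈ fs, g ≠ []) (hf : f ∈ fs) :
    f.length < fs.flatten.length := by
  obtain ⟨s, t, rfl⟩ := List.append_of_mem hf
  have hs : s.length ≤ s.flatten.length :=
    length_le_length_flatten_of_ne_nil (fun g hg => hne g (by simp [hg]))
  have ht : t.length ≤ t.flatten.length :=
    length_le_length_flatten_of_ne_nil (fun g hg => hne g (by simp [hg]))
  have hlen : 2 ≤ s.length + t.length + 1 := by
    simp only [List.length_append, List.length_cons] at h2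
    omega
  have hj : (s ++ f :: t).flatten.length
      = s.flatten.length + f.length + t.flatten.length := by
    simp [List.flatten_append]
    omega
  omega

/-- A nonempty word is Nyldon if it admits no factorization into at least two
lexicographically nondecreasing Nyldon words. (Single letters are Nyldon vacuously,
since they admit no factorization into at least two nonempty words at all.) -/
def IsNyldon {A : Type*} [LinearOrder A] (w : List A) : Prop :=
  w ≠ [] ∧ ∀ fs : List (List A), 2 ≤ fs.length → (∀ g ∈ fs, g ≠ []) →
    fs.flatten = w → (∀ f ∈ fs, IsNyldon f) → fs.Chain' LexLe → False
termination_by w.length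
decreasing_by
  rename_i h2 hne hjoin hf
  subst hjoin
  exact length_lt_length_flatten h2 hne hf

/-- A nonempty word is Lyndon if it admits no factorization into at least two
lexicographically nonincreasing Lyndon words. -/
def IsLyndon {A : Type*} [LinearOrder A] (w : List A) : Prop :=
  w ≠ [] ∧ ∀ fs : List (List A), 2 ≤ fs.length → (∀ g ∈ fs, g ≠ []) →
    fs.flatten = w → (∀ f ∈ fs, IsLyndon f) →
    fs.Chain' (fun u v => LexLe v u) → False
termination_by w.length
decreasing_by
  rename_i h2 hne hjoin hf
  subst hjoin
  exact length_lt_length_flatten h2 hne hf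

/-- `fs` is a Nyldon factorization of `w`: a nondecreasing (under `≤_lex`) sequence
of Nyldon words whose concatenation is `w`. -/
def IsNyldonFactorization {A : Type*} [LinearOrder A] (fs : List (List A)) (w : List A) :
    Prop :=
  (∀ f ∈ fs, IsNyldon f) ∧ fs.Chain' LexLe ∧ fs.flatten = w

/-- The `j`-th power `u^j` of a word `u`: the concatenation of `j` copies of `u`. -/
def wordPow {A : Type*} (u : List A) (j : ℕ) : List A :=
  (List.replicate j u).flatten

/-- A word is primitive if it is not a power `u^j` of a word `u` with `j ≥ 2`. -/
def Primitive {A : Type*} (w : List A) : Prop :=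
  ∀ (u : List A) (j : ℕ), 2 ≤ j → w ≠ wordPow u j

/-- A Nyldon-like set over the alphabet `A`: a set `Mem` of nonempty words together with a
strict total order `lt` on it, such that every single letter is in the set, a word of length
at least `2` is in the set iff it admits no factorization into at least two nondecreasing
words of the set, and `f ≺ fg` whenever `f`, `g`, `fg` are all in the set. -/
structure NyldonLike (A : Type*) where
  /-- membership in `G` -/
  Mem : List A → Prop
  /-- the strict total order `≺` on `G` -/
  lt : List A → List A → Prop
  mem_ne_nil : ∀ w, Mem w → w ≠ []
  lt_irrefl : ∀ u, Mem u → ¬ lt u u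
  lt_trans : ∀ u v x, Mem u → Mem v → Mem x → lt u v → lt v x → lt u x
  lt_total : ∀ u v, Mem u → Mem v → lt u v ∨ u = v ∨ lt v u
  singleton_mem : ∀ a : A, Mem [a]
  mem_iff : ∀ w : List A, 2 ≤ w.length →
    (Mem w ↔ ¬ ∃ fs : List (List A), 2 ≤ fs.length ∧ (∀ f ∈ fs, Mem f) ∧
      fs.Chain' (fun u v => u = v ∨ lt u v) ∧ fs.flatten = w)
  append_lt : ∀ f g, Mem f → Mem g → Mem (f ++ g) → lt f (f ++ g)

namespace NyldonLike

variable {A : Type*}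

/-- The nonstrict order `⪯` associated to a Nyldon-like set. -/
def le (G : NyldonLike A) (u v : List A) : Prop :=
  u = v ∨ G.lt u v

/-- `fs` is a `G`-factorization of `w`: a nondecreasing (under `⪯`) sequence of
`G`-words whose concatenation is `w`. -/
def IsFactorization (G : NyldonLike A) (fs : List (List A)) (w : List A) : Prop :=
  (∀ f ∈ fs, G.Mem f) ∧ fs.Chain' G.le ∧ fs.flatten = w

end NyldonLike

/-- A factorization `fs` of a word written as the concatenation of `blocks` preserves the
blocks if each factor is the concatenation of a (nonempty) consecutive run of whole blocks. -/
def PreservesBlocks {A : Type*} (blocks fs : List (List A)) : Prop :=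
  ∃ P : List (List (List A)), (∀ p ∈ P, p ≠ []) ∧ P.flatten = blocks ∧
    P.map List.flatten = fs

/-- A right Hall set over the alphabet `A`: a set `Mem` of nonempty words with a strict
total order `lt` such that every nonempty word has a unique nondecreasing factorization
into words of the set, and `fg ≻ g` whenever `f`, `g`, `fg` are all in the set. -/
structure RightHallSet (A : Type*) where
  /-- membership in `H` -/
  Mem : List A → Prop
  /-- the strict total order `≺` on `H` -/
  lt : List A → List A → Prop
  mem_ne_nil : ∀ w, Mem w → w ≠ []
  lt_irrefl : ∀ u, Mem u → ¬ lt u u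
  lt_trans : ∀ u v x, Mem u → Mem v → Mem x → lt u v → lt v x → lt u x
  lt_total : ∀ u v, Mem u → Mem v → lt u v ∨ u = v ∨ lt v u
  unique_factorization : ∀ w : List A, w ≠ [] →
    ∃! fs : List (List A), (∀ f ∈ fs, Mem f) ∧
      fs.Chain' (fun u v => u = v ∨ lt u v) ∧ fs.flatten = w
  append_gt : ∀ f g, Mem f → Mem g → Mem (f ++ g) → lt g (f ++ g)

/-- A set `F` of words is a code if any two sequences of words of `F` with equal
concatenations are equal. -/
def IsCode {A : Type*} (F : List A → Prop) : Prop :=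
  ∀ l₁ l₂ : List (List A), (∀ f ∈ l₁, F f) → (∀ f ∈ l₂, F f) →
    l₁.flatten = l₂.flatten → l₁ = l₂

/-- `w ∈ F*`: `w` is a concatenation of (zero or more) words of `F`. -/
def CodeStar {A : Type*} (F : List A → Prop) (w : List A) : Prop :=
  ∃ l : List (List A), (∀ f ∈ l, F f) ∧ l.flatten = w

/-- A set `F` of words is a circular code if it is a code and whenever
`uv ∈ F*` and `vu ∈ F*`, also `u ∈ F*` and `v ∈ F*`. -/
def IsCircularCode {A : Type*} (F : List A → Prop) : Prop :=
  IsCode F ∧ ∀ u v : List A, CodeStar F (u ++ v) → CodeStar F (v ++ u) → CodeStar F u ∧ CodeStar F v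

open List

theorem isNyldon_singleton {A : Type*} [LinearOrder A] (c : A) : IsNyldon [c] := by
  rw [IsNyldon]
  refine ⟨by simp, fun fs h2 hne hj hn hc => ?_⟩
  have := length_le_length_flatten_of_ne_nil hne
  rw [hj] at this
  simp at this
  omega

theorem not_isNyldon_iff {A : Type*} [LinearOrder A] {w : List A} (hw : w ≠ []) :
    ¬ IsNyldon w ↔ ∃ fs : List (List A), 2 ≤ fs.length ∧ (∀ g ∈ fs, g ≠ []) ∧
      fs.flatten = w ∧ (∀ f ∈ fs, IsNyldon f) ∧ fs.Chain' LexLe := by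
  rw [IsNyldon]
  push_neg
  constructor
  · rintro h
    obtain ⟨fs, h1, h2, h3, h4, h5, -⟩ := h hw
    exact ⟨fs, h1, h2, h3, h4, h5⟩
  · rintro ⟨fs, h1, h2, h3, h4, h5⟩ -
    exact ⟨fs, h1, h2, h3, h4, h5, trivial⟩

theorem nyldon_ne_nil {A : Type*} [LinearOrder A] {w : List A} (h : IsNyldon w) : w ≠ [] := by
  rw [IsNyldon] at h; exact h.1

theorem exists_nyldon_factorization {A : Type*} [LinearOrder A] {w : List A} (hw : w ≠ []) :
    ∃ fs : List (List A), fs ≠ [] ∧ (∀ f ∈ fs, IsNyldon f) ∧ fs.Chain' LexLe ∧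
      fs.flatten = w := by
  by_cases h : IsNyldon w
  · exact ⟨[w], by simp, by simpa using h, List.isChain_singleton _, by simp⟩
  · obtain ⟨fs, h1, h2, h3, h4, h5⟩ := (not_isNyldon_iff hw).mp h
    exact ⟨fs, by rintro rfl; simp at h1, h4, h5, h3⟩

theorem lexlt_append {A : Type*} [LinearOrder A] (l : List A) {z : List A} (hz : z ≠ []) :
    LexLt l (l ++ z) := by
  induction l with
  | nil => cases z with
    | nil => exact absurd rfl hz
    | cons c t => exact List.Lex.nil
  | cons c t ih => exact List.Lex.cons ih

theorem lexle_head {A : Type*} [LinearOrder A] {x y : A} {l1 l2 : List A}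
    (h : LexLe (x :: l1) (y :: l2)) : x ≤ y := by
  rcases h with h | h
  · cases h; exact le_rfl
  · cases h with
    | rel h => exact le_of_lt h
    | cons h => exact le_rfl

theorem lexle_tail {A : Type*} [LinearOrder A] {x : A} {l1 l2 : List A}
    (h : LexLe (x :: l1) (x :: l2)) : LexLe l1 l2 := by
  rcases h with h | h
  · exact Or.inl (by injection h)
  · cases h with
    | rel h => exact absurd h (lt_irrefl x)
    | cons h => exact Or.inr h

theorem not_lexle_cons_single {A : Type*} [LinearOrder A] {x y z : A} {l : List A}
    (h : LexLe (x :: y :: l) [z]) : x < z := by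
  rcases h with h | h
  · simp at h
  · cases h with
    | rel h => exact h
    | cons h => exact absurd h List.not_lex_nil

theorem append_eq_replicate' {A : Type*} {l1 l2 : List A} {k : ℕ} {c : A}
    (h : l1 ++ l2 = List.replicate k c) :
    l1 = List.replicate l1.length c ∧ l2 = List.replicate l2.length c ∧
      l1.length + l2.length = k := by
  have hlen : l1.length + l2.length = k := by
    have := congrArg List.length h; simpa using this
  refine ⟨?_, ?_, hlen⟩
  · exact List.eq_replicate_of_mem (fun x hx => List.eq_of_mem_replicate
      (h ▸ List.mem_append_left l2 hx))
  · exact List.eq_replicate_of_mem (fun x hx => List.eq_of_mem_replicate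
      (h ▸ List.mem_append_right l1 hx))

section FinLemmas
variable {m : ℕ}

/-- the letter `m-1` -/
def bm (m : ℕ) : Fin (m + 1) := ⟨m - 1, by omega⟩

/-- the word `m (m-1) m^j` -/
def Pw (m j : ℕ) : List (Fin (m + 1)) := Fin.last m :: bm m :: List.replicate j (Fin.last m)

theorem bm_lt_last (hm : 1 ≤ m) : bm m < Fin.last m := by
  simp only [bm, Fin.last, Fin.lt_def]
  omega

theorem eq_last_of_bm_lt {c : Fin (m + 1)} (h : bm m < c) : c = Fin.last m := by
  rcases c with ⟨cv, hcv⟩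
  simp only [bm, Fin.lt_def] at h
  simp only [Fin.last, Fin.ext_iff]
  omega

theorem Pw_length (m j : ℕ) : (Pw m j).length = j + 2 := by simp [Pw]

theorem not_isNyldon_top_top (w : List (Fin (m + 1))) :
    ¬ IsNyldon (Fin.last m :: Fin.last m :: w) := by
  intro h
  obtain ⟨fs, hne, hnyl, hch, hflat⟩ :=
    exists_nyldon_factorization (w := Fin.last m :: w) (by simp)
  rw [IsNyldon] at h
  refine h.2 ([Fin.last m] :: fs) ?_ ?_ ?_ ?_ ?_
  · simp only [List.length_cons]
    have : 1 ≤ fs.length := List.length_pos_iff.mpr hne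
    omega
  · intro g hg
    rcases List.mem_cons.mp hg with rfl | hg
    · simp
    · exact nyldon_ne_nil (hnyl g hg)
  · simp [hflat]
  · intro f hf
    rcases List.mem_cons.mp hf with rfl | hf
    · exact isNyldon_singleton _
    · exact hnyl f hf
  · obtain ⟨f, fs', rfl⟩ := List.exists_cons_of_ne_nil hne
    simp only [List.Chain', List.isChain_cons_cons]
    refine ⟨?_, hch⟩
    -- f is a nonempty prefix of (last m :: w), so it starts with last m
    have hfne : f ≠ [] := nyldon_ne_nil (hnyl f (by simp))
    obtain ⟨c, f', rfl⟩ := List.exists_cons_of_ne_nil hfne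
    simp only [List.flatten_cons, List.cons_append] at hflat
    have hc : c = Fin.last m := by injection hflat
    subst hc
    rcases eq_or_ne f' [] with rfl | hf'
    · exact Or.inl rfl
    · exact Or.inr (lexlt_append [Fin.last m] hf')

theorem lex_replicate_last {k : ℕ} {x y : List (Fin (m + 1))}
    (h : List.Lex (· < ·) (List.replicate k (Fin.last m) ++ x) y) :
    ∃ y', y = List.replicate k (Fin.last m) ++ y' ∧ List.Lex (· < ·) x y' := by
  induction k generalizing y with
  | zero => exact ⟨y, by simp, by simpa using h⟩
  | succ k ih =>
    rw [List.replicate_succ, List.cons_append] at h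
    cases h with
    | rel hr => exact absurd hr (not_lt.mpr (Fin.le_last _))
    | cons h =>
      obtain ⟨y', rfl, hy'⟩ := ih h
      exact ⟨y', by simp [List.replicate_succ], hy'⟩

theorem lexle_replicate_last {k : ℕ} {x y : List (Fin (m + 1))}
    (h : LexLe (List.replicate k (Fin.last m) ++ x) y) :
    ∃ y', y = List.replicate k (Fin.last m) ++ y' ∧ LexLe x y' := by
  rcases h with rfl | h
  · exact ⟨x, rfl, Or.inl rfl⟩
  · obtain ⟨y', rfl, hy'⟩ := lex_replicate_last h
    exact ⟨y', rfl, Or.inr hy'⟩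

theorem lex_nil_iff {A : Type*} [LinearOrder A] {y : List A} :
    List.Lex (· < ·) ([] : List A) y ↔ y ≠ [] := by
  constructor
  · rintro h rfl; exact List.not_lex_nil h
  · intro h; obtain ⟨c, t, rfl⟩ := List.exists_cons_of_ne_nil h; exact List.Lex.nil

end FinLemmas

section PwNyldon
variable {m : ℕ}

theorem isNyldon_Pw (hm : 1 ≤ m) (j : ℕ) : IsNyldon (Pw m j) := by
  rw [IsNyldon]
  refine ⟨by simp [Pw], fun fs h2 hne hflat hnyl hch => ?_⟩
  match fs, h2 with
  | f1 :: f2 :: rest, _ =>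
  simp only [List.Chain', List.isChain_cons_cons] at hch
  have hch1 : LexLe f1 f2 := hch.1
  have hf2nyl : IsNyldon f2 := hnyl f2 (by simp)
  have hf2ne : f2 ≠ [] := nyldon_ne_nil hf2nyl
  simp only [List.flatten_cons, List.append_assoc] at hflat
  match f1, hflat with
  | [], _ => exact (hne [] (by simp)) rfl
  | [x], hflat =>
    simp only [Pw, List.cons_append, List.nil_append] at hflat
    obtain ⟨rfl, hflat2⟩ : x = Fin.last m ∧ f2 ++ rest.flatten = bm m :: List.replicate j (Fin.last m) := by
      constructor <;> [injection hflat; injection hflat]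
    obtain ⟨c, f2', rfl⟩ := List.exists_cons_of_ne_nil hf2ne
    have hc : c = bm m := by
      rw [List.cons_append] at hflat2; injection hflat2
    subst hc
    have := lexle_head hch1
    exact absurd this (not_le.mpr (bm_lt_last hm))
  | x :: y :: f1', hflat =>
    simp only [Pw, List.cons_append] at hflat
    obtain ⟨rfl, rfl, hflat3⟩ :
        x = Fin.last m ∧ y = bm m ∧ f1' ++ (f2 ++ rest.flatten) = List.replicate j (Fin.last m) := by
      refine ⟨by injection hflat, ?_, ?_⟩
      · have h2' := hflat; injection h2' with _ h2''; injection h2''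
      · have h2' := hflat; injection h2' with _ h2''; injection h2''
    obtain ⟨hf1', hrem, -⟩ := append_eq_replicate' hflat3
    obtain ⟨hf2r, -, -⟩ := append_eq_replicate' hrem
    match f2, hf2r with
    | [], _ => exact hf2ne rfl
    | [c], hf2r =>
      have hc : c = Fin.last m := by
        simpa using hf2r
      subst hc
      exact absurd (not_lexle_cons_single hch1) (lt_irrefl _)
    | c :: d :: f2', hf2r =>
      have hc : c = Fin.last m ∧ d = Fin.last m := by
        rw [show (c :: d :: f2').length = f2'.length + 2 from rfl,
          List.replicate_succ, List.replicate_succ] at hf2r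
        constructor <;> [injection hf2r; · have := hf2r; injection this with _ h; injection h]
      obtain ⟨rfl, rfl⟩ := hc
      exact not_isNyldon_top_top f2' hf2nyl

end PwNyldon

section KeyM
variable {m : ℕ}

theorem situationB (hm : 1 ≤ m) {j : ℕ} {s s1 f2 X : List (Fin (m + 1))}
    (hlen : s.length ≤ j + 3) (hseq : s = s1 ++ (f2 ++ X))
    (hf2ne : f2 ≠ []) (hf2nyl : IsNyldon f2)
    (hch1 : LexLe (Fin.last m :: bm m :: (List.replicate j (Fin.last m) ++ s1)) f2) :
    ∃ r, s = Pw m j ++ r ∧ r.length ≤ 1 := by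
  obtain ⟨x, f2', rfl⟩ := List.exists_cons_of_ne_nil hf2ne
  cases f2' with
  | nil =>
    have := not_lexle_cons_single hch1
    exact absurd this (not_lt.mpr (Fin.le_last x))
  | cons y f2'' =>
    have hx : x = Fin.last m :=
      le_antisymm (Fin.le_last x) (lexle_head hch1)
    subst hx
    have hch2 := lexle_tail hch1
    have hby : bm m ≤ y := lexle_head hch2
    rcases eq_or_lt_of_le hby with rfl | hby'
    swap
    · exact absurd hf2nyl (eq_last_of_bm_lt hby' ▸ not_isNyldon_top_top f2'')
    have hch3 := lexle_tail hch2
    obtain ⟨y'', hf2'', hle⟩ := lexle_replicate_last hch3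
    subst hf2''
    -- length accounting
    have hlens : s1.length + (y''.length + X.length) ≤ 1 := by
      have := congrArg List.length hseq
      simp only [List.length_append, List.length_cons, List.length_replicate] at this
      omega
    cases s1 with
    | cons c s1' => -- s1 nonempty: contradiction
      have hy'' : y'' = [] := by
        have : y''.length = 0 := by simp at hlens; omega
        exact List.eq_nil_of_length_eq_zero this
      subst hy''
      rcases hle with h | h
      · simp at h
      · exact absurd h List.not_lex_nil
    | nil =>
      refine ⟨y'' ++ X, ?_, ?_⟩
      · simp only [Pw, hseq, List.nil_append, List.cons_append, List.append_assoc]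
      · simp at hlens ⊢; omega

theorem keyM (hm : 1 ≤ m) {j : ℕ} (hj : 3 ≤ j) {s : List (Fin (m + 1))} (hs : s ≠ [])
    (hlen : s.length ≤ j + 3) (h : ¬ IsNyldon (Pw m j ++ s)) :
    (∃ t, s = bm m :: (List.replicate (j - 1) (Fin.last m) ++ t)) ∨
      (∃ r, s = Pw m j ++ r ∧ r.length ≤ 1) := by
  obtain ⟨fs, h2, hneF, hflat, hnyl, hch⟩ := (not_isNyldon_iff (by simp [Pw])).mp h
  match fs, h2 with
  | f1 :: f2 :: rest, _ =>
  simp only [List.Chain', List.isChain_cons_cons] at hch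
  have hch1 : LexLe f1 f2 := hch.1
  have hf2nyl : IsNyldon f2 := hnyl f2 (by simp)
  have hf2ne : f2 ≠ [] := nyldon_ne_nil hf2nyl
  have hf1ne : f1 ≠ [] := hneF f1 (by simp)
  simp only [List.flatten_cons, List.append_assoc] at hflat
  set X := rest.flatten with hX
  obtain ⟨x1, f1', rfl⟩ := List.exists_cons_of_ne_nil hf1ne
  simp only [Pw, List.cons_append, List.append_assoc] at hflat
  have hx1 : x1 = Fin.last m := by injection hflat
  subst hx1
  have hflat1 : f1' ++ (f2 ++ X) = bm m :: (List.replicate j (Fin.last m) ++ s) := by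
    injection hflat
  cases f1' with
  | nil =>
    -- f1 = [a], f2 starts with bm: chain contradiction
    simp only [List.nil_append] at hflat1
    obtain ⟨c, f2', rfl⟩ := List.exists_cons_of_ne_nil hf2ne
    have hc : c = bm m := by
      rw [List.cons_append] at hflat1; injection hflat1
    subst hc
    have := lexle_head hch1
    exact absurd this (not_le.mpr (bm_lt_last hm))
  | cons y1 f1'' =>
    have hy1 : y1 = bm m := by rw [List.cons_append] at hflat1; injection hflat1
    subst hy1
    have hflat2 : f1'' ++ (f2 ++ X) = List.replicate j (Fin.last m) ++ s := by
      rw [List.cons_append] at hflat1; injection hflat1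
    rcases List.append_eq_append_iff.mp hflat2 with ⟨w, hw1, hw2⟩ | ⟨w, hw1, hw2⟩
    · -- replicate j = f1'' ++ w, f2 ++ X = w ++ s
      obtain ⟨hf1r, hwr, hsum⟩ := append_eq_replicate' hw1.symm
      rw [hwr] at hw2
      cases hd : w.length with
      | zero =>
        -- f1 = Pw m j, use situation B with s1 = []
        have hw0 : w = [] := List.eq_nil_of_length_eq_zero hd
        rw [hw0] at hw2
        simp only [List.length_nil, List.replicate_zero, List.nil_append] at hw2
        have hsum' : f1''.length = j := by omega
        right
        refine situationB hm hlen (s1 := []) (X := X)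
          (by rw [List.nil_append]; exact hw2.symm) hf2ne hf2nyl ?_
        rw [List.append_nil]
        rw [hf1r, hsum'] at hch1
        exact hch1
      | succ d' =>
        rw [hd] at hw2
        cases d' with
        | zero =>
          -- remainder starts with a single `a`: f2 = a :: y :: …, s = y :: …
          simp only [List.replicate_succ, List.replicate_zero, List.nil_append,
            List.cons_append] at hw2
          obtain ⟨x, f2', rfl⟩ := List.exists_cons_of_ne_nil hf2ne
          cases f2' with
          | nil =>
            have := not_lexle_cons_single hch1
            exact absurd this (not_lt.mpr (Fin.le_last x))
          | cons y f2'' =>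
            have hx : x = Fin.last m := by
              rw [List.cons_append] at hw2; injection hw2
            subst hx
            have hrests : y :: f2'' ++ X = s := by
              rw [List.cons_append] at hw2; injection hw2
            -- heads: from chain f1 ≤ f2
            have hi : f1''.length = j - 1 := by omega
            rw [hf1r, hi] at hch1
            have hch2 := lexle_tail hch1
            have hby : bm m ≤ y := lexle_head hch2
            rcases eq_or_lt_of_le hby with rfl | hby'
            swap
            · exact absurd hf2nyl (eq_last_of_bm_lt hby' ▸ not_isNyldon_top_top f2'')
            have hch3 := lexle_tail hch2
            have hch3' : LexLe (List.replicate (j-1) (Fin.last m) ++ []) f2'' := by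
              rwa [List.append_nil]
            obtain ⟨y', hf2'', -⟩ := lexle_replicate_last hch3'
            left
            refine ⟨y' ++ X, ?_⟩
            rw [← hrests, hf2'']
            simp [List.append_assoc]
        | succ d'' =>
          -- remainder starts with a,a : f2 is a::a::… or [a], both impossible
          simp only [List.replicate_succ, List.cons_append] at hw2
          obtain ⟨x, f2', rfl⟩ := List.exists_cons_of_ne_nil hf2ne
          have hx : x = Fin.last m := by
            rw [List.cons_append] at hw2; injection hw2
          subst hx
          cases f2' with
          | nil =>
            have := not_lexle_cons_single hch1
            exact absurd this (lt_irrefl _)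
          | cons y f2'' =>
            have hy : y = Fin.last m := by
              rw [List.cons_append, List.cons_append] at hw2
              have := hw2; injection this with _ h'; injection h'
            subst hy
            exact absurd hf2nyl (not_isNyldon_top_top f2'')
    · -- f1'' = replicate j ++ w, s = w ++ (f2 ++ X) : situation B
      right
      rw [hw1] at hch1
      exact situationB hm hlen hw2 hf2ne hf2nyl hch1

end KeyM

section Charac
variable {m : ℕ}

theorem lexle_self_append (v t : List (Fin (m + 1))) : LexLe v (v ++ t) := by
  rcases eq_or_ne t [] with rfl | h
  · exact Or.inl (by simp)
  · exact Or.inr (lexlt_append v h)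

theorem isNyldon_Pw_append_short (hm : 1 ≤ m) {j : ℕ} (hj : 4 ≤ j)
    {t : List (Fin (m + 1))} (hlt : t.length ≤ 3) : IsNyldon (Pw m j ++ t) := by
  rcases eq_or_ne t [] with rfl | hne
  · simpa using isNyldon_Pw hm j
  · by_contra h
    rcases keyM hm (by omega) hne (by omega) h with ⟨t', ht'⟩ | ⟨r, hr, -⟩
    · have := congrArg List.length ht'
      simp only [List.length_cons, List.length_append, List.length_replicate] at this
      omega
    · have := congrArg List.length hr
      simp only [List.length_append, Pw_length] at this
      omega

theorem not_nyldon_two_factors {v w : List (Fin (m + 1))} (hv : IsNyldon v)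
    (hw : IsNyldon w) (hle : LexLe v w) : ¬ IsNyldon (v ++ w) := by
  intro h
  rw [IsNyldon] at h
  refine h.2 [v, w] (by simp) ?_ (by simp) ?_ ?_
  · intro g hg
    rcases List.mem_cons.mp hg with rfl | hg
    · exact nyldon_ne_nil hv
    · simp at hg; subst hg; exact nyldon_ne_nil hw
  · intro f hf
    rcases List.mem_cons.mp hf with rfl | hf
    · exact hv
    · simp at hf; subst hf; exact hw
  · simp [List.Chain', List.isChain_cons_cons, hle]

theorem flatten_case1 (hn : 7 ≤ n) (t : List (Fin (m + 1))) :
    Pw m (n - 3) ++ (Pw m (n - 3) ++ t)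
      = Pw m (n - 2) ++ (bm m :: (List.replicate (n - 3) (Fin.last m) ++ t)) := by
  have h2 : n - 2 = (n - 3) + 1 := by omega
  simp only [Pw, h2, List.replicate_succ', List.cons_append, List.append_assoc]
  simp

theorem not_nyldon_case1 (hm : 1 ≤ m) {n : ℕ} (hn : 7 ≤ n) {t : List (Fin (m + 1))}
    (ht : t.length ≤ 3) :
    ¬ IsNyldon (Pw m (n - 2) ++ (bm m :: (List.replicate (n - 3) (Fin.last m) ++ t))) := by
  rw [← flatten_case1 hn]
  exact not_nyldon_two_factors (isNyldon_Pw hm _)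
    (by
      rcases eq_or_ne t [] with rfl | hne
      · simpa using isNyldon_Pw hm (n - 3)
      · exact isNyldon_Pw_append_short hm (by omega) ht)
    (lexle_self_append _ _)

theorem not_nyldon_case2 (hm : 1 ≤ m) {n : ℕ} :
    ¬ IsNyldon (Pw m (n - 2) ++ Pw m (n - 2)) :=
  not_nyldon_two_factors (isNyldon_Pw hm _) (isNyldon_Pw hm _) (Or.inl rfl)

theorem not_nyldon_case3 (hm : 1 ≤ m) {n : ℕ} (hn : 7 ≤ n) (c : Fin (m + 1)) :
    ¬ IsNyldon (Pw m (n - 2) ++ (Pw m (n - 2) ++ [c])) :=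
  not_nyldon_two_factors (isNyldon_Pw hm _)
    (isNyldon_Pw_append_short hm (by omega) (by simp))
    (lexle_self_append _ _)

theorem shape_of_gt {k : ℕ} {x : List (Fin (m + 1))} (hx : IsNyldon x)
    (hlex : LexLt (Pw m k) x) : ∃ z, z ≠ [] ∧ x = Pw m k ++ z := by
  rw [LexLt, Pw] at hlex
  cases hlex with
  | rel h => exact absurd h (not_lt.mpr (Fin.le_last _))
  | cons h =>
    cases h with
    | rel h2 =>
      have := eq_last_of_bm_lt h2
      subst this
      exact absurd hx (not_isNyldon_top_top _)
    | cons h2 =>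
      rw [← List.append_nil (List.replicate k (Fin.last m))] at h2
      obtain ⟨y', rfl, hy'⟩ := lex_replicate_last h2
      refine ⟨y', (lex_nil_iff).mp hy', by simp [Pw]⟩

end Charac

section Counting
variable {m : ℕ}

def allW (m : ℕ) : ℕ → Finset (List (Fin (m + 1)))
  | 0 => {[]}
  | k + 1 => Finset.univ.biUnion fun c => (allW m k).image (c :: ·)

theorem mem_allW {k : ℕ} {z : List (Fin (m + 1))} : z ∈ allW m k ↔ z.length = k := by
  induction k generalizing z with
  | zero => simp [allW, List.length_eq_zero_iff]
  | succ k ih =>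
    simp only [allW, Finset.mem_biUnion, Finset.mem_univ, true_and, Finset.mem_image]
    constructor
    · rintro ⟨c, t, ht, rfl⟩
      simp [ih.mp ht]
    · intro h
      cases z with
      | nil => simp at h
      | cons c t => exact ⟨c, t, ih.mpr (by simpa using h), rfl⟩

theorem card_allW (k : ℕ) : (allW m k).card = (m + 1) ^ k := by
  induction k with
  | zero => simp [allW]
  | succ k ih =>
    rw [allW, Finset.card_biUnion]
    · simp [Finset.card_image_of_injective _ (List.cons_injective), ih, pow_succ, mul_comm]
    · intro c _ d _ hcd
      simp only [Finset.disjoint_left, Finset.mem_image]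
      rintro z ⟨t, _, rfl⟩ ⟨t', _, heq⟩
      exact hcd (by injection heq with h _; exact h.symm)

theorem geom_mul (q : ℕ) (hq : 1 ≤ q) :
    ∀ N : ℕ, ((Finset.Icc 1 N).sum (fun k => q ^ k)) * (q - 1) = q ^ (N + 1) - q := by
  intro N
  induction N with
  | zero => simp
  | succ N ih =>
    rw [show N + 1 = N + 1 from rfl, Finset.sum_Icc_succ_top (by omega)]
    have h1 : q ^ (N + 1) * (q - 1) = q ^ (N + 2) - q ^ (N + 1) := by
      rw [Nat.mul_sub, mul_one, ← pow_succ]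
    have h2 : q ≤ q ^ (N + 1) := Nat.le_self_pow (by omega) q
    have h3 : q ^ (N + 1) ≤ q ^ (N + 2) := Nat.pow_le_pow_right (by omega) (by omega)
    rw [add_mul, ih, h1, show N + 1 + 1 = N + 2 from rfl]
    omega

end Counting

section Sets
variable {m : ℕ}

def Tn (m n : ℕ) : Finset (List (Fin (m + 1))) := (Finset.Icc 1 (n + 1)).biUnion (allW m)

theorem mem_Tn {n : ℕ} {z : List (Fin (m + 1))} :
    z ∈ Tn m n ↔ 1 ≤ z.length ∧ z.length ≤ n + 1 := by
  simp only [Tn, Finset.mem_biUnion, Finset.mem_Icc, mem_allW]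
  constructor
  · rintro ⟨k, hk, rfl⟩; exact hk
  · intro h; exact ⟨z.length, h, rfl⟩

theorem card_Tn (n : ℕ) : (Tn m n).card * ((m + 1) - 1) = (m + 1) ^ (n + 2) - (m + 1) := by
  rw [Tn, Finset.card_biUnion]
  · have : ∀ k ∈ Finset.Icc 1 (n + 1), (allW m k).card = (m + 1) ^ k :=
      fun k _ => card_allW k
    rw [Finset.sum_congr rfl this, geom_mul (m + 1) (by omega) (n + 1)]
  · intro i _ j _ hij
    simp only [Finset.disjoint_left, mem_allW]
    rintro z rfl h
    exact hij h

def E1 (m n : ℕ) : Finset (List (Fin (m + 1))) :=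
  ((Finset.range 4).biUnion (allW m)).image
    (fun t => bm m :: (List.replicate (n - 3) (Fin.last m) ++ t))

def E2 (m n : ℕ) : Finset (List (Fin (m + 1))) := {Pw m (n - 2)}

def E3 (m n : ℕ) : Finset (List (Fin (m + 1))) :=
  Finset.univ.image (fun c : Fin (m + 1) => Pw m (n - 2) ++ [c])

def Efin (m n : ℕ) : Finset (List (Fin (m + 1))) := (E1 m n ∪ E2 m n) ∪ E3 m n

theorem card_E1 (n : ℕ) : (E1 m n).card = 1 + (m + 1) + (m + 1) ^ 2 + (m + 1) ^ 3 := by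
  rw [E1, Finset.card_image_of_injective, Finset.card_biUnion]
  · have : ∀ k ∈ Finset.range 4, (allW m k).card = (m + 1) ^ k := fun k _ => card_allW k
    rw [Finset.sum_congr rfl this]
    simp [Finset.sum_range_succ]
    try ring
  · intro i _ j _ hij
    simp only [Finset.disjoint_left, mem_allW]
    rintro z rfl h
    exact hij h
  · intro t1 t2 h
    simp only [List.cons.injEq, true_and] at h
    exact List.append_right_injective _ h

theorem card_E3 (n : ℕ) : (E3 m n).card = m + 1 := by
  rw [E3, Finset.card_image_of_injective, Finset.card_univ, Fintype.card_fin]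
  intro c d h
  have := List.append_right_injective _ h
  injection this

theorem bm_ne_last (hm : 1 ≤ m) : bm m ≠ Fin.last m := by
  intro h
  have := congrArg Fin.val h
  simp only [bm, Fin.val_last] at this
  omega

theorem card_Efin (hm : 1 ≤ m) {n : ℕ} (hn : 7 ≤ n) :
    (Efin m n).card = (m + 1) ^ 3 + (m + 1) ^ 2 + 2 * (m + 1) + 2 := by
  have d12 : Disjoint (E1 m n) (E2 m n) := by
    simp only [Finset.disjoint_left, E1, E2, Finset.mem_image, Finset.mem_singleton]
    rintro z ⟨t, -, rfl⟩ h
    rw [Pw] at h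
    exact bm_ne_last hm (by injection h)
  have d13 : Disjoint (E1 m n ∪ E2 m n) (E3 m n) := by
    simp only [Finset.disjoint_left, E1, E2, E3, Finset.mem_union, Finset.mem_image,
      Finset.mem_singleton, Finset.mem_univ, true_and]
    rintro z (⟨t, -, rfl⟩ | rfl) ⟨c, hc⟩
    · rw [Pw, List.cons_append] at hc
      exact bm_ne_last hm (by injection hc.symm)
    · have := congrArg List.length hc
      simp only [List.length_append, Pw_length, List.length_cons, List.length_nil] at this
      omega
  rw [Efin, Finset.card_union_of_disjoint d13, Finset.card_union_of_disjoint d12,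
    card_E1, card_E3, E2, Finset.card_singleton]
  ring

theorem Efin_subset (hm : 1 ≤ m) {n : ℕ} (hn : 7 ≤ n) : Efin m n ⊆ Tn m n := by
  intro z hz
  rw [mem_Tn]
  simp only [Efin, E1, E2, E3, Finset.mem_union, Finset.mem_image, Finset.mem_singleton,
    Finset.mem_biUnion, Finset.mem_range, Finset.mem_univ, true_and] at hz
  rcases hz with (⟨t, ⟨k, hk, htk⟩, rfl⟩ | rfl) | ⟨c, rfl⟩
  · rw [mem_allW] at htk
    simp only [List.length_cons, List.length_append, List.length_replicate]
    omega
  · rw [Pw_length]; omega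
  · simp only [List.length_append, Pw_length, List.length_cons, List.length_nil]
    omega

end Sets

/-- Over `A = {0, 1, …, m}` with `m ≥ 1` (so `|A| = m + 1`), for `n ≥ 7`
and `u = m (m-1) m^{n-2}` (of length `n`), the number of Nyldon words `x` with
`|x| ≤ 2n + 1` and `x >_lex u` is
`(|A|^(n+2) - |A|) / (|A| - 1) - (|A|^3 + |A|^2 + 2|A| + 2)`. -/
theorem stmt_18 (m n : ℕ) (hm : 1 ≤ m) (hn : 7 ≤ n) :
    {x : List (Fin (m + 1)) | IsNyldon x ∧ x.length ≤ 2 * n + 1 ∧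
        LexLt (Fin.last m :: (⟨m - 1, by omega⟩ : Fin (m + 1)) ::
          List.replicate (n - 2) (Fin.last m)) x}.ncard
      = ((m + 1) ^ (n + 2) - (m + 1)) / ((m + 1) - 1)
          - ((m + 1) ^ 3 + (m + 1) ^ 2 + 2 * (m + 1) + 2) := by
  have key : {x : List (Fin (m + 1)) | IsNyldon x ∧ x.length ≤ 2 * n + 1 ∧
        LexLt (Fin.last m :: (⟨m - 1, by omega⟩ : Fin (m + 1)) ::
          List.replicate (n - 2) (Fin.last m)) x}
      = ↑((Tn m n \ Efin m n).image (fun z => Pw m (n - 2) ++ z)) := by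
    ext x
    simp only [Set.mem_setOf_eq, Finset.coe_image, Set.mem_image, Finset.mem_coe,
      Finset.mem_sdiff]
    constructor
    · rintro ⟨hx, hlen, hlex⟩
      have hlex' : LexLt (Pw m (n - 2)) x := hlex
      obtain ⟨z, hzne, rfl⟩ := shape_of_gt hx hlex'
      refine ⟨z, ⟨?_, ?_⟩, rfl⟩
      · rw [mem_Tn]
        have h1 := List.length_pos_iff.mpr hzne
        rw [List.length_append, Pw_length] at hlen
        omega
      · intro hz
        simp only [Efin, Finset.mem_union] at hz
        rcases hz with (hz | hz) | hz
        · simp only [E1, Finset.mem_image] at hz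
          obtain ⟨t, ht, rfl⟩ := hz
          simp only [Finset.mem_biUnion, Finset.mem_range] at ht
          obtain ⟨k, hk, htk⟩ := ht
          rw [mem_allW] at htk
          exact not_nyldon_case1 hm hn (by omega) hx
        · simp only [E2, Finset.mem_singleton] at hz
          subst hz
          exact not_nyldon_case2 hm hx
        · simp only [E3, Finset.mem_image, Finset.mem_univ, true_and] at hz
          obtain ⟨c, rfl⟩ := hz
          exact not_nyldon_case3 hm hn c hx
    · rintro ⟨z, ⟨hzT, hzE⟩, rfl⟩
      rw [mem_Tn] at hzT
      have hzne : z ≠ [] := by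
        intro h; rw [h] at hzT; simp at hzT
      refine ⟨?_, ?_, ?_⟩
      · by_contra h
        rcases keyM hm (j := n - 2) (by omega) hzne (by omega) h with ⟨t, rfl⟩ | ⟨r, rfl, hr⟩
        · apply hzE
          simp only [Efin, E1, Finset.mem_union, Finset.mem_image]
          refine Or.inl (Or.inl ⟨t, ?_, ?_⟩)
          · simp only [Finset.mem_biUnion, Finset.mem_range]
            refine ⟨t.length, ?_, mem_allW.mpr rfl⟩
            have := hzT.2
            simp only [List.length_cons, List.length_append, List.length_replicate] at this
            omega
          · rw [show n - 2 - 1 = n - 3 from by omega]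
        · apply hzE
          match r, hr with
          | [], _ =>
            simp only [Efin, E2, Finset.mem_union, Finset.mem_singleton]
            exact Or.inl (Or.inr (by simp))
          | [c], _ =>
            simp only [Efin, E3, Finset.mem_union, Finset.mem_image, Finset.mem_univ, true_and]
            exact Or.inr ⟨c, rfl⟩
      · rw [List.length_append, Pw_length]
        omega
      · exact lexlt_append (Pw m (n - 2)) hzne
  rw [key, Set.ncard_coe_finset,
    Finset.card_image_of_injective _ (List.append_right_injective _),
    Finset.card_sdiff_of_subset (Efin_subset hm hn), card_Efin hm hn]
  congr 1
  have h1 : 0 < (m + 1) - 1 := by omega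
  exact (Nat.div_eq_of_eq_mul_left h1 (card_Tn n).symm).symm
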